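/- Assume the KKT setup with dataset size m, that m·(p+1) ≤ (d+1)/3, that both labels occur (I^+ ≠ ∅ and I^− ≠ ∅), and that |I^+| ≥ c·m and |I^−| ≥ c·m for some c ∈ (0,1]. Set c' := m(p+1)/(d+1), η₁ := (p+1)/(d − m·p), η₂ := 2(c·c'+1)(d+1)/(m·c·(d − m·p)), and z := (η₁ + η₂) · Σ_{l=1}^m y_l x_l. Then for every i ∈ I^+ we have N_θ(x_i − z) ≤ −1. -/

import Mathlib

open InnerProductSpace Finset

/-- A depth-2 ReLU network of width `k` with first-layer weights `w`, biases `b`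
and second-layer weights `v`. -/
noncomputable def net {d k : ℕ} (w : Fin k → EuclideanSpace ℝ (Fin d))
    (b v : Fin k → ℝ) (z : EuclideanSpace ℝ (Fin d)) : ℝ :=
  ∑ j, v j * max 0 (⟪w j, z⟫_ℝ + b j)

lemma aux_max (g h : ℝ) (hh : 0 ≤ h) : max 0 g + h - max 0 (-g) ≤ max 0 (g + h) := by
  rcases le_or_gt 0 g with h1 | h1
  · rw [max_eq_right h1, max_eq_left (neg_nonpos.mpr h1), max_eq_right (by linarith)]
    linarith
  · rw [max_eq_left h1.le, max_eq_right (by linarith : (0:ℝ) ≤ -g)]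
    have := le_max_right (0:ℝ) (g + h)
    linarith

set_option maxHeartbeats 2000000 in
theorem kkt_perturbation_flips_positive (d m k : ℕ)
    (x : Fin m → EuclideanSpace ℝ (Fin d)) (y : Fin m → ℝ)
    (w : Fin k → EuclideanSpace ℝ (Fin d)) (b v : Fin k → ℝ)
    (lam : Fin m → ℝ) (s : Fin m → Fin k → ℝ) (p : ℝ)
    (hy : ∀ i, y i = 1 ∨ y i = -1)
    (hx : ∀ i, ‖x i‖ = Real.sqrt d)
    (hp0 : 0 ≤ p)
    (hp : ∀ i j, i ≠ j → |⟪x i, x j⟫_ℝ| ≤ p)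
    (hlam : ∀ i, 0 ≤ lam i)
    (hs01 : ∀ i j, s i j ∈ Set.Icc (0 : ℝ) 1)
    (hmargin : ∀ i, 1 ≤ y i * net w b v (x i))
    (hcomp : ∀ i, y i * net w b v (x i) ≠ 1 → lam i = 0)
    (hs1 : ∀ i j, 0 < ⟪w j, x i⟫_ℝ + b j → s i j = 1)
    (hs0 : ∀ i j, ⟪w j, x i⟫_ℝ + b j < 0 → s i j = 0)
    (hw : ∀ j, w j = ∑ i, (lam i * y i * v j * s i j) • x i)
    (hb : ∀ j, b j = ∑ i, lam i * y i * v j * s i j)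
    (hmp : (m : ℝ) * (p + 1) ≤ ((d : ℝ) + 1) / 3)
    (hIp : ∃ i, y i = 1) (hIm : ∃ i, y i = -1)
    (c : ℝ) (hc0 : 0 < c) (hc1 : c ≤ 1)
    (hcp : c * m ≤ ((Finset.univ.filter fun i => y i = 1).card : ℝ))
    (hcm : c * m ≤ ((Finset.univ.filter fun i => y i = -1).card : ℝ))
    (η₁ η₂ : ℝ)
    (hη₁ : η₁ = (p + 1) / ((d : ℝ) - (m : ℝ) * p))
    (hη₂ : η₂ = 2 * (c * ((m : ℝ) * (p + 1) / ((d : ℝ) + 1)) + 1) * ((d : ℝ) + 1) /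
      ((m : ℝ) * c * ((d : ℝ) - (m : ℝ) * p))) :
    ∀ i, y i = 1 → net w b v (x i - (η₁ + η₂) • ∑ l, y l • x l) ≤ -1 := by
  intro i hyi
  -- basic numeric facts
  have hm1 : (1:ℝ) ≤ (m:ℝ) := by
    obtain ⟨i0, _⟩ := hIp
    have : 0 < m := Fin.pos i0
    exact_mod_cast this
  have hdpos : (0:ℝ) < (d:ℝ) - (m:ℝ) * p := by nlinarith
  have hp1 : (0:ℝ) < p + 1 := by linarith
  have hη₁' : η₁ * ((d:ℝ) - (m:ℝ) * p) = p + 1 := by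
    rw [hη₁]; field_simp
    exact div_self (ne_of_gt (by linarith [hdpos, mul_comm (m:ℝ) p]))
  have hη₁0 : 0 ≤ η₁ := by rw [hη₁]; positivity
  have hmc : (0:ℝ) < (m:ℝ) * c := by nlinarith
  have hη₂0 : 0 ≤ η₂ := by
    rw [hη₂]
    have h1 : (0:ℝ) < (d:ℝ) + 1 := by positivity
    apply div_nonneg _ (by nlinarith)
    have : (0:ℝ) ≤ c * ((m:ℝ) * (p+1) / ((d:ℝ)+1)) := by positivity
    nlinarith
  have hη0 : 0 ≤ η₁ + η₂ := by linarith
  have hy1 : ∀ l, y l ^ 2 = 1 := fun l => by rcases hy l with h | h <;> rw [h] <;> norm_num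
  have hyabs : ∀ l, |y l| = 1 := fun l => by rcases hy l with h | h <;> rw [h] <;> norm_num
  have hxx : ∀ n, ⟪x n, x n⟫_ℝ = (d:ℝ) := fun n => by
    rw [real_inner_self_eq_norm_sq, hx n, Real.sq_sqrt (Nat.cast_nonneg d)]
  have hsn : ∀ n j, 0 ≤ s n j := fun n j => (hs01 n j).1
  have hsu : ∀ n j, s n j ≤ 1 := fun n j => (hs01 n j).2
  set A : Fin k → ℝ := fun j => ∑ l, lam l * s l j with hAdef
  have hA0 : ∀ j, 0 ≤ A j := fun j => Finset.sum_nonneg fun l _ => mul_nonneg (hlam l) (hsn l j)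
  -- the preactivation formula
  have hg : ∀ n j, ⟪w j, x n⟫_ℝ + b j = ∑ l, lam l * y l * v j * s l j * (⟪x l, x n⟫_ℝ + 1) := by
    intro n j
    rw [hw j, hb j, sum_inner, ← Finset.sum_add_distrib]
    exact Finset.sum_congr rfl fun l _ => by rw [real_inner_smul_left]; ring
  -- diagonal extraction bound
  have CB : ∀ n j, |(⟪w j, x n⟫_ℝ + b j) - v j * (lam n * y n * s n j * ((d:ℝ)+1))|
      ≤ |v j| * ((p+1) * A j) := by
    intro n j
    have e1 : (⟪w j, x n⟫_ℝ + b j) - v j * (lam n * y n * s n j * ((d:ℝ)+1))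
        = ∑ l ∈ Finset.univ.erase n, lam l * y l * v j * s l j * (⟪x l, x n⟫_ℝ + 1) := by
      rw [hg n j, ← Finset.sum_erase_add _ _ (Finset.mem_univ n), hxx n]
      ring
    rw [e1]
    calc |∑ l ∈ Finset.univ.erase n, lam l * y l * v j * s l j * (⟪x l, x n⟫_ℝ + 1)|
        ≤ ∑ l ∈ Finset.univ.erase n, |lam l * y l * v j * s l j * (⟪x l, x n⟫_ℝ + 1)| :=
          Finset.abs_sum_le_sum_abs _ _
      _ ≤ ∑ l ∈ Finset.univ.erase n, lam l * s l j * (|v j| * (p+1)) := by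
          apply Finset.sum_le_sum
          intro l hl
          have hl' : l ≠ n := Finset.ne_of_mem_erase hl
          have h1 : |⟪x l, x n⟫_ℝ + 1| ≤ p + 1 := by
            calc |⟪x l, x n⟫_ℝ + 1| ≤ |⟪x l, x n⟫_ℝ| + |(1:ℝ)| := abs_add_le _ _
              _ ≤ p + 1 := by rw [abs_one]; linarith [hp l n hl']
          rw [abs_mul, abs_mul, abs_mul, abs_mul, hyabs l, abs_of_nonneg (hlam l),
            abs_of_nonneg (hsn l j)]
          have h2 : |v j| * |⟪x l, x n⟫_ℝ + 1| ≤ |v j| * (p + 1) :=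
            mul_le_mul_of_nonneg_left h1 (abs_nonneg _)
          have h3 := mul_le_mul_of_nonneg_left h2 (mul_nonneg (hlam l) (hsn l j))
          linarith
      _ ≤ ∑ l, lam l * s l j * (|v j| * (p+1)) := by
          apply Finset.sum_le_sum_of_subset_of_nonneg (Finset.erase_subset _ _)
          intro l _ _
          exact mul_nonneg (mul_nonneg (hlam l) (hsn l j)) (mul_nonneg (abs_nonneg _) hp1.le)
      _ = |v j| * ((p+1) * A j) := by
          rw [hAdef]; rw [← Finset.sum_mul]; ring
  -- subgradient times preactivation is the relu value
  have SG : ∀ n j, max 0 (⟪w j, x n⟫_ℝ + b j) = s n j * (⟪w j, x n⟫_ℝ + b j) := by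
    intro n j
    rcases lt_trichotomy (⟪w j, x n⟫_ℝ + b j) 0 with h | h | h
    · rw [hs0 n j h, max_eq_left h.le, zero_mul]
    · rw [h, mul_zero, max_self]
    · rw [hs1 n j h, one_mul, max_eq_right h.le]
  -- the perturbation direction bound
  have L4 : ∀ j, v j^2 * (A j * ((d:ℝ) - (m:ℝ)*p)) ≤ v j * ⟪w j, ∑ l, y l • x l⟫_ℝ := by
    intro j
    have hZ : ∀ r : Fin m, ⟪x r, ∑ l, y l • x l⟫_ℝ = ∑ l, y l * ⟪x r, x l⟫_ℝ := fun r => by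
      rw [inner_sum]
      exact Finset.sum_congr rfl fun l _ => real_inner_smul_right _ _ _
    have hW : v j * ⟪w j, ∑ l, y l • x l⟫_ℝ
        = v j^2 * ∑ r, lam r * s r j * (y r * ∑ l, y l * ⟪x r, x l⟫_ℝ) := by
      rw [hw j, sum_inner, Finset.mul_sum, Finset.mul_sum]
      exact Finset.sum_congr rfl fun r _ => by rw [real_inner_smul_left, hZ r]; ring
    rw [hW]
    have hK : ∀ r : Fin m, (d:ℝ) - (m:ℝ)*p ≤ y r * ∑ l, y l * ⟪x r, x l⟫_ℝ := by
      intro r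
      have e1 : y r * ∑ l, y l * ⟪x r, x l⟫_ℝ
          = (∑ l ∈ Finset.univ.erase r, y r * y l * ⟪x r, x l⟫_ℝ) + (d:ℝ) := by
        rw [Finset.mul_sum, ← Finset.sum_erase_add _ _ (Finset.mem_univ r), hxx r]
        have h2 : y r * (y r * (d:ℝ)) = (d:ℝ) := by
          linear_combination (d:ℝ) * hy1 r
        rw [h2]
        congr 1
        exact Finset.sum_congr rfl fun l _ => by ring
      rw [e1]
      have e2 : ∀ l ∈ Finset.univ.erase r, -p ≤ y r * y l * ⟪x r, x l⟫_ℝ := by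
        intro l hl
        have hl' : l ≠ r := Finset.ne_of_mem_erase hl
        have h3 : |y r * y l * ⟪x r, x l⟫_ℝ| ≤ p := by
          rw [abs_mul, abs_mul, hyabs r, hyabs l]
          simpa using hp r l (Ne.symm hl')
        linarith [(abs_le.mp h3).1]
      have e3 := Finset.card_nsmul_le_sum (Finset.univ.erase r) _ (-p) e2
      rw [nsmul_eq_mul] at e3
      have e4 : ((Finset.univ.erase r).card : ℝ) ≤ (m:ℝ) := by
        have h5 : (Finset.univ.erase r).card ≤ m := by
          calc (Finset.univ.erase r).card ≤ (Finset.univ : Finset (Fin m)).card :=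
                Finset.card_le_card (Finset.erase_subset _ _)
            _ = m := by simp
        exact_mod_cast h5
      have e5 := mul_le_mul_of_nonneg_right e4 hp0
      linarith
    have hsum : A j * ((d:ℝ) - (m:ℝ)*p) ≤ ∑ r, lam r * s r j * (y r * ∑ l, y l * ⟪x r, x l⟫_ℝ) := by
      rw [hAdef]
      rw [show (∑ l, lam l * s l j) * ((d:ℝ) - (m:ℝ)*p) = ∑ r, lam r * s r j * ((d:ℝ) - (m:ℝ)*p)
        from Finset.sum_mul _ _ _]
      exact Finset.sum_le_sum fun r _ =>
        mul_le_mul_of_nonneg_left (hK r) (mul_nonneg (hlam r) (hsn r j))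
    exact mul_le_mul_of_nonneg_left hsum (sq_nonneg (v j))
  -- mass of negative neurons
  set Φ : ℝ := ∑ j, (min (v j) 0)^2 * A j with hΦdef
  have hΦ0 : 0 ≤ Φ := Finset.sum_nonneg fun j _ => mul_nonneg (sq_nonneg _) (hA0 j)
  set Im : Finset (Fin m) := Finset.univ.filter (fun n => y n = -1) with hImdef
  have hcard : ∀ n ∈ Im, (1:ℝ) ≤ ((d:ℝ)+1) * (lam n * ∑ j, (min (v j) 0)^2 * s n j) + (p+1)*Φ := by
    intro n hn
    have hyn : y n = -1 := by
      have := (Finset.mem_filter.mp hn).2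
      exact this
    have h1 : (1:ℝ) ≤ - net w b v (x n) := by
      have := hmargin n; rw [hyn] at this; linarith
    have h2 : - net w b v (x n) = ∑ j, -(v j * max 0 (⟪w j, x n⟫_ℝ + b j)) := by
      simp only [net]; rw [← Finset.sum_neg_distrib]
    have h3 : ∀ j, -(v j * max 0 (⟪w j, x n⟫_ℝ + b j))
        ≤ (min (v j) 0)^2 * (lam n * s n j * ((d:ℝ)+1) + (p+1) * A j) := by
      intro j
      rcases lt_trichotomy (v j) 0 with hv | hv | hv
      · have hmin : min (v j) 0 = v j := min_eq_left hv.le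
        rw [hmin, SG n j]
        have habs := CB n j
        have hgu : ⟪w j, x n⟫_ℝ + b j
            ≤ v j * (lam n * y n * s n j * ((d:ℝ)+1)) + |v j| * ((p+1) * A j) := by
          have := (le_abs_self ((⟪w j, x n⟫_ℝ + b j)
            - v j * (lam n * y n * s n j * ((d:ℝ)+1)))).trans habs
          linarith
        rw [hyn, abs_of_neg hv] at hgu
        have hmain := mul_le_mul_of_nonneg_left hgu
          (mul_nonneg (by linarith : (0:ℝ) ≤ -v j) (hsn n j))
        have h4 : 0 ≤ v j^2 * lam n * ((d:ℝ)+1) * (s n j * (1 - s n j)) :=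
          mul_nonneg (mul_nonneg (mul_nonneg (sq_nonneg _) (hlam n)) (by positivity))
            (mul_nonneg (hsn n j) (by linarith [hsu n j]))
        have h5 : 0 ≤ v j^2 * ((p+1) * A j) * (1 - s n j) :=
          mul_nonneg (mul_nonneg (sq_nonneg _) (mul_nonneg hp1.le (hA0 j)))
            (by linarith [hsu n j])
        linarith [hmain, h4, h5]
      · rw [hv]; simp
      · rw [min_eq_right hv.le]
        have : 0 ≤ v j * max 0 (⟪w j, x n⟫_ℝ + b j) :=
          mul_nonneg hv.le (le_max_left _ _)
        nlinarith
    calc (1:ℝ) ≤ - net w b v (x n) := h1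
      _ = ∑ j, -(v j * max 0 (⟪w j, x n⟫_ℝ + b j)) := h2
      _ ≤ ∑ j, (min (v j) 0)^2 * (lam n * s n j * ((d:ℝ)+1) + (p+1) * A j) :=
          Finset.sum_le_sum fun j _ => h3 j
      _ = ((d:ℝ)+1) * (lam n * ∑ j, (min (v j) 0)^2 * s n j) + (p+1)*Φ := by
          rw [hΦdef,
            show ((d:ℝ)+1) * (lam n * ∑ j, (min (v j) 0)^2 * s n j)
              = ∑ j, ((d:ℝ)+1) * (lam n * ((min (v j) 0)^2 * s n j)) by
                rw [Finset.mul_sum, Finset.mul_sum],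
            show (p+1) * ∑ j, (min (v j) 0)^2 * A j = ∑ j, (p+1) * ((min (v j) 0)^2 * A j)
              from Finset.mul_sum _ _ _,
            ← Finset.sum_add_distrib]
          exact Finset.sum_congr rfl fun j _ => by ring
  have sum2 : ∑ n ∈ Im, lam n * ∑ j, (min (v j) 0)^2 * s n j ≤ Φ := by
    have e1 : ∑ n ∈ Im, lam n * ∑ j, (min (v j) 0)^2 * s n j
        = ∑ j, (min (v j) 0)^2 * ∑ n ∈ Im, lam n * s n j := by
      simp_rw [Finset.mul_sum]
      rw [Finset.sum_comm]
      exact Finset.sum_congr rfl fun j _ => Finset.sum_congr rfl fun n _ => by ring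
    rw [e1, hΦdef]
    apply Finset.sum_le_sum
    intro j _
    apply mul_le_mul_of_nonneg_left _ (sq_nonneg _)
    exact Finset.sum_le_sum_of_subset_of_nonneg (Finset.subset_univ Im)
      (fun n _ _ => mul_nonneg (hlam n) (hsn n j))
  have NEG : (Im.card : ℝ) ≤ ((d:ℝ)+1)*Φ + (p+1)*(Im.card : ℝ)*Φ := by
    have s1 : (Im.card : ℝ) ≤ ∑ n ∈ Im,
        (((d:ℝ)+1) * (lam n * ∑ j, (min (v j) 0)^2 * s n j) + (p+1)*Φ) := by
      calc (Im.card : ℝ) = ∑ _n ∈ Im, (1:ℝ) := by rw [Finset.sum_const, nsmul_eq_mul, mul_one]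
        _ ≤ _ := Finset.sum_le_sum hcard
    have s2 : ∑ n ∈ Im, (((d:ℝ)+1) * (lam n * ∑ j, (min (v j) 0)^2 * s n j) + (p+1)*Φ)
        = ((d:ℝ)+1) * (∑ n ∈ Im, lam n * ∑ j, (min (v j) 0)^2 * s n j)
          + (Im.card : ℝ) * ((p+1)*Φ) := by
      rw [Finset.sum_add_distrib, Finset.sum_const, nsmul_eq_mul, ← Finset.mul_sum]
    have s3 := mul_le_mul_of_nonneg_left sum2 (by positivity : (0:ℝ) ≤ (d:ℝ)+1)
    rw [s2] at s1
    nlinarith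
  have hβ : c * (m:ℝ) ≤ (Im.card : ℝ) := hcm
  have hβpos : (0:ℝ) < (Im.card : ℝ) := lt_of_lt_of_le (by nlinarith) hβ
  have hkey2 : (m:ℝ) * c ≤ Φ * (c*(m:ℝ)*(p+1) + ((d:ℝ)+1)) := by
    have h1 : (Im.card:ℝ) * ((m:ℝ)*c) ≤ (Im.card:ℝ) * (Φ * (c*(m:ℝ)*(p+1) + ((d:ℝ)+1))) := by
      have hint1 := mul_le_mul_of_nonneg_left NEG (le_of_lt hmc)
      have hint2 := mul_le_mul_of_nonneg_right hβ
        (mul_nonneg (by positivity : (0:ℝ) ≤ (d:ℝ)+1) hΦ0)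
      linarith [hint1, hint2]
    exact le_of_mul_le_mul_left h1 hβpos
  have KEY : 2 ≤ η₂ * ((d:ℝ) - (m:ℝ)*p) * Φ := by
    have hd1 : ((d:ℝ)+1) ≠ 0 := by positivity
    have hdmp' : ((d:ℝ) - (m:ℝ)*p) ≠ 0 := ne_of_gt hdpos
    have hmc' : ((m:ℝ)*c) ≠ 0 := ne_of_gt hmc
    have he : η₂ * ((d:ℝ) - (m:ℝ)*p) * Φ = 2 * (Φ * (c*(m:ℝ)*(p+1) + ((d:ℝ)+1))) / ((m:ℝ)*c) := by
      rw [hη₂]; field_simp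
    rw [he]
    rw [le_div_iff₀ hmc]
    linarith [hkey2]
  -- expand the perturbed network
  have hexp : net w b v (x i - (η₁ + η₂) • ∑ l, y l • x l)
      = ∑ j, v j * max 0 ((⟪w j, x i⟫_ℝ + b j) - (η₁+η₂) * ⟪w j, ∑ l, y l • x l⟫_ℝ) := by
    simp only [net]
    refine Finset.sum_congr rfl fun j _ => ?_
    rw [inner_sub_right, real_inner_smul_right]
    ring_nf
  by_cases hmg : y i * net w b v (x i) = 1
  · -- case A : margin equality
    have hneti : net w b v (x i) = 1 := by rw [hyi, one_mul] at hmg; exact hmg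
    have perj : ∀ j, v j * max 0 ((⟪w j, x i⟫_ℝ + b j) - (η₁+η₂) * ⟪w j, ∑ l, y l • x l⟫_ℝ)
        ≤ v j * max 0 (⟪w j, x i⟫_ℝ + b j) - η₂*((d:ℝ)-(m:ℝ)*p) * ((min (v j) 0)^2 * A j) := by
      intro j
      rcases lt_trichotomy (v j) 0 with hv | hv | hv
      · -- negative neuron
        have hmin : min (v j) 0 = v j := min_eq_left hv.le
        rw [hmin]
        have hWub : (η₁+η₂) * ⟪w j, ∑ l, y l • x l⟫_ℝ
            ≤ (η₁+η₂) * (v j * (A j * ((d:ℝ)-(m:ℝ)*p))) := by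
          apply mul_le_mul_of_nonneg_left _ hη0
          nlinarith [L4 j]
        set h : ℝ := -((η₁+η₂) * (v j * (A j * ((d:ℝ)-(m:ℝ)*p)))) with hhdef
        have hh : 0 ≤ h := by
          have : 0 ≤ (η₁+η₂) * ((-v j) * (A j * ((d:ℝ)-(m:ℝ)*p))) :=
            mul_nonneg hη0 (mul_nonneg (by linarith) (mul_nonneg (hA0 j) hdpos.le))
          rw [hhdef]; nlinarith
        have hNG : max 0 (-(⟪w j, x i⟫_ℝ + b j)) ≤ (-v j) * ((p+1) * A j) := by
          rcases le_or_gt 0 (⟪w j, x i⟫_ℝ + b j) with h1 | h1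
          · rw [max_eq_left (neg_nonpos.mpr h1)]
            exact mul_nonneg (by linarith) (mul_nonneg hp1.le (hA0 j))
          · have hsz : s i j = 0 := hs0 i j h1
            have habs := CB i j
            rw [hsz] at habs
            simp only [mul_zero, zero_mul, sub_zero] at habs
            rw [abs_of_neg hv] at habs
            rw [max_eq_right (by linarith : (0:ℝ) ≤ -(⟪w j, x i⟫_ℝ + b j))]
            calc -(⟪w j, x i⟫_ℝ + b j) ≤ |⟪w j, x i⟫_ℝ + b j| := neg_le_abs _
              _ ≤ _ := habs
        have s1 : v j * max 0 ((⟪w j, x i⟫_ℝ + b j) - (η₁+η₂) * ⟪w j, ∑ l, y l • x l⟫_ℝ)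
            ≤ v j * max 0 ((⟪w j, x i⟫_ℝ + b j) + h) := by
          apply mul_le_mul_of_nonpos_left _ hv.le
          exact max_le_max le_rfl (by rw [hhdef]; linarith)
        have s2 : v j * max 0 ((⟪w j, x i⟫_ℝ + b j) + h)
            ≤ v j * (max 0 (⟪w j, x i⟫_ℝ + b j) + h - max 0 (-(⟪w j, x i⟫_ℝ + b j))) :=
          mul_le_mul_of_nonpos_left (aux_max _ h hh) hv.le
        have s3 : (-v j) * max 0 (-(⟪w j, x i⟫_ℝ + b j)) ≤ (-v j) * ((-v j) * ((p+1) * A j)) :=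
          mul_le_mul_of_nonneg_left hNG (by linarith)
        have hfin : v j * h = -(v j^2 * (A j * ((p+1) + η₂*((d:ℝ)-(m:ℝ)*p)))) := by
          rw [hhdef]
          linear_combination (-(v j^2 * A j)) * hη₁'
        linarith [s1, s2, s3, hfin]
      · rw [hv]; simp
      · -- positive neuron
        have hmin : min (v j) 0 = 0 := min_eq_right hv.le
        rw [hmin]
        have hW0 : 0 ≤ ⟪w j, ∑ l, y l • x l⟫_ℝ := by
          have h0 : 0 ≤ v j * ⟪w j, ∑ l, y l • x l⟫_ℝ :=
            le_trans (mul_nonneg (sq_nonneg _) (mul_nonneg (hA0 j) hdpos.le)) (L4 j)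
          have h0' : v j * 0 ≤ v j * ⟪w j, ∑ l, y l • x l⟫_ℝ := by simpa using h0
          exact le_of_mul_le_mul_left h0' hv
        have : max 0 ((⟪w j, x i⟫_ℝ + b j) - (η₁+η₂) * ⟪w j, ∑ l, y l • x l⟫_ℝ)
            ≤ max 0 (⟪w j, x i⟫_ℝ + b j) :=
          max_le_max le_rfl (by nlinarith [mul_nonneg hη0 hW0])
        linarith [mul_le_mul_of_nonneg_left this hv.le]
    rw [hexp]
    have sum_le := Finset.sum_le_sum (fun j (_ : j ∈ Finset.univ) => perj j)
    have expand : ∑ j, (v j * max 0 (⟪w j, x i⟫_ℝ + b j)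
          - η₂*((d:ℝ)-(m:ℝ)*p) * ((min (v j) 0)^2 * A j))
        = net w b v (x i) - η₂*((d:ℝ)-(m:ℝ)*p) * Φ := by
      rw [Finset.sum_sub_distrib, ← Finset.mul_sum, hΦdef]
      simp only [net]
    rw [expand] at sum_le
    rw [hneti] at sum_le
    linarith [KEY]
  · -- case B : lam i = 0
    have hlami : lam i = 0 := hcomp i hmg
    have perj : ∀ j, v j * max 0 ((⟪w j, x i⟫_ℝ + b j) - (η₁+η₂) * ⟪w j, ∑ l, y l • x l⟫_ℝ)
        ≤ -(η₂*((d:ℝ)-(m:ℝ)*p)) * ((min (v j) 0)^2 * A j) := by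
      intro j
      have habs := CB i j
      rw [hlami] at habs
      simp only [zero_mul, mul_zero, sub_zero] at habs
      rcases lt_trichotomy (v j) 0 with hv | hv | hv
      · have hmin : min (v j) 0 = v j := min_eq_left hv.le
        rw [abs_of_neg hv] at habs
        rw [hmin]
        have hWub : (η₁+η₂) * ⟪w j, ∑ l, y l • x l⟫_ℝ
            ≤ (η₁+η₂) * (v j * (A j * ((d:ℝ)-(m:ℝ)*p))) := by
          apply mul_le_mul_of_nonneg_left _ hη0
          nlinarith [L4 j]
        have hub : v j * max 0 ((⟪w j, x i⟫_ℝ + b j) - (η₁+η₂) * ⟪w j, ∑ l, y l • x l⟫_ℝ)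
            ≤ v j * ((⟪w j, x i⟫_ℝ + b j) - (η₁+η₂) * ⟪w j, ∑ l, y l • x l⟫_ℝ) :=
          mul_le_mul_of_nonpos_left (le_max_right _ _) hv.le
        have hG : v j * (⟪w j, x i⟫_ℝ + b j) ≤ v j^2 * ((p+1) * A j) := by
          have h1 : -(⟪w j, x i⟫_ℝ + b j) ≤ (-v j) * ((p+1) * A j) :=
            le_trans (neg_le_abs _) habs
          nlinarith [h1]
        have hWW : - (v j * ((η₁+η₂) * ⟪w j, ∑ l, y l • x l⟫_ℝ))
            ≤ -((η₁+η₂) * (v j^2 * (A j * ((d:ℝ)-(m:ℝ)*p)))) := by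
          have := mul_le_mul_of_nonneg_left (L4 j) hη0
          nlinarith
        have hfin : (η₁+η₂) * (v j^2 * (A j * ((d:ℝ)-(m:ℝ)*p)))
            = v j^2 * (A j * ((p+1) + η₂*((d:ℝ)-(m:ℝ)*p))) := by
          linear_combination (v j^2 * A j) * hη₁'
        linarith [hub, hG, hWW, hfin]
      · rw [hv]; simp
      · have hmin : min (v j) 0 = 0 := min_eq_right hv.le
        rw [abs_of_pos hv] at habs
        rw [hmin]
        have hWlb : v j * (A j * ((d:ℝ)-(m:ℝ)*p)) ≤ ⟪w j, ∑ l, y l • x l⟫_ℝ := by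
          have := L4 j
          nlinarith
        have hG : ⟪w j, x i⟫_ℝ + b j ≤ v j * ((p+1) * A j) :=
          le_trans (le_abs_self _) habs
        have hzero : max 0 ((⟪w j, x i⟫_ℝ + b j) - (η₁+η₂) * ⟪w j, ∑ l, y l • x l⟫_ℝ) = 0 := by
          apply max_eq_left
          have h1 : (η₁+η₂) * (v j * (A j * ((d:ℝ)-(m:ℝ)*p)))
              ≤ (η₁+η₂) * ⟪w j, ∑ l, y l • x l⟫_ℝ :=
            mul_le_mul_of_nonneg_left hWlb hη0
          have h2 : (η₁+η₂) * (v j * (A j * ((d:ℝ)-(m:ℝ)*p)))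
              = v j * (A j * ((p+1) + (η₁+η₂-η₁)*((d:ℝ)-(m:ℝ)*p))) := by
            linear_combination (v j * A j) * hη₁'
          have h3 : v j * ((p+1) * A j) ≤ v j * (A j * ((p+1) + η₂*((d:ℝ)-(m:ℝ)*p))) := by
            have : 0 ≤ v j * (A j * (η₂*((d:ℝ)-(m:ℝ)*p))) :=
              mul_nonneg hv.le (mul_nonneg (hA0 j) (mul_nonneg hη₂0 hdpos.le))
            linarith [this]
          have h2' : (η₁+η₂) * (v j * (A j * ((d:ℝ)-(m:ℝ)*p)))
              = v j * (A j * ((p+1) + η₂*((d:ℝ)-(m:ℝ)*p))) := by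
            rw [h2]; ring_nf
          linarith [hG, h1, h2', h3]
        rw [hzero, mul_zero]
        simp
    rw [hexp]
    have sum_le := Finset.sum_le_sum (fun j (_ : j ∈ Finset.univ) => perj j)
    have expand : ∑ j, (-(η₂*((d:ℝ)-(m:ℝ)*p)) * ((min (v j) 0)^2 * A j))
        = -(η₂*((d:ℝ)-(m:ℝ)*p)) * Φ := by
      rw [← Finset.mul_sum, hΦdef]
    rw [expand] at sum_le
    linarith [KEY]
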